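/- For all a, b > 0 with a ≠ b, the double inequality α·D(a,b) + (1−α)·H(a,b) < T(a,b) < β·D(a,b) + (1−β)·H(a,b) holds if and only if α ≤ 4/9 and β ≥ 2/π. -/

import Mathlib

noncomputable def harmonicMean (a b : ℝ) : ℝ := 2 * a * b / (a + b)

noncomputable def seiffertT (a b : ℝ) : ℝ := (a - b) / (2 * Real.arctan ((a - b) / (a + b)))

noncomputable def contraD (a b : ℝ) : ℝ := (a ^ 3 + b ^ 3) / (a ^ 2 + b ^ 2)

open Real Set Filter Topology

lemma arctan_lower {t : ℝ} (ht : 0 < t) : t - t^3/3 < Real.arctan t := by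
  have H : StrictMonoOn (fun x : ℝ => Real.arctan x - x + x^3/3) (Set.Ici 0) := by
    apply strictMonoOn_of_deriv_pos (convex_Ici 0)
    · exact (Real.continuous_arctan.sub continuous_id).add
        ((continuous_pow 3).div_const 3) |>.continuousOn
    · intro x hx
      rw [interior_Ici] at hx
      have hd : HasDerivAt (fun x : ℝ => Real.arctan x - x + x^3/3)
          (1/(1+x^2) - 1 + (3*x^2)/3) x := by
        have := ((Real.hasDerivAt_arctan x).fun_sub (hasDerivAt_id x)).fun_add
          ((hasDerivAt_pow 3 x).div_const 3)
        simpa using this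
      rw [hd.deriv]
      have h1 : (0:ℝ) < 1 + x^2 := by positivity
      have h2 : 1/(1+x^2) - 1 + (3*x^2)/3 = x^4/(1+x^2) := by field_simp; ring
      rw [h2]
      have : (0:ℝ) < x := hx
      positivity
  have := H ((Set.self_mem_Ici (a := (0:ℝ)))) (le_of_lt ht) ht
  simp only [Real.arctan_zero] at this
  linarith

lemma arctan_pos' {t : ℝ} (ht : 0 < t) : 0 < Real.arctan t := by
  have := Real.arctan_strictMono ht
  simpa using this

lemma mainA_arctan {t : ℝ} (ht : t ∈ Set.Ioo (0:ℝ) 1) :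
    Real.arctan t < 9*t*(1+t^2)/(9+12*t^2-5*t^4) := by
  have hden : ∀ x ∈ Set.Icc (0:ℝ) 1, (0:ℝ) < 9+12*x^2-5*x^4 := by
    rintro x ⟨h0, h1⟩
    have hx2 : x^2 ≤ 1 := by nlinarith
    have h4 : x^4 ≤ 1 := by nlinarith [sq_nonneg x]
    nlinarith [sq_nonneg x]
  have H : StrictMonoOn (fun x : ℝ => (9*x+9*x^3)/(9+12*x^2-5*x^4) - Real.arctan x)
      (Set.Icc 0 1) := by
    apply strictMonoOn_of_deriv_pos (convex_Icc 0 1)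
    · apply ContinuousOn.sub
      · exact ContinuousOn.div (by fun_prop) (by fun_prop)
          (fun x hx => (hden x hx).ne')
      · exact Real.continuous_arctan.continuousOn
    · intro x hx
      rw [interior_Icc] at hx
      have hDx : (0:ℝ) < 9+12*x^2-5*x^4 := hden x ⟨hx.1.le, hx.2.le⟩
      have hN : HasDerivAt (fun x : ℝ => 9*x+9*x^3) (9 + 9*(3*x^2)) x := by
        have := ((hasDerivAt_id x).const_mul 9).fun_add ((hasDerivAt_pow 3 x).const_mul 9)
        simpa using this
      have hD : HasDerivAt (fun x : ℝ => 9+12*x^2-5*x^4) (12*(2*x) - 5*(4*x^3)) x := by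
        have := (((hasDerivAt_pow 2 x).const_mul 12).const_add 9).fun_sub
          ((hasDerivAt_pow 4 x).const_mul 5)
        simpa using this
      have hq := (hN.fun_div hD hDx.ne').fun_sub (Real.hasDerivAt_arctan x)
      rw [hq.deriv]
      have h1 : (0:ℝ) < 1 + x^2 := by positivity
      have key : ((9 + 9*(3*x^2)) * (9+12*x^2-5*x^4) - (9*x+9*x^3) * (12*(2*x) - 5*(4*x^3)))
          / (9+12*x^2-5*x^4)^2 - 1/(1+x^2)
          = (324*x^4+408*x^6+20*x^8)/((9+12*x^2-5*x^4)^2*(1+x^2)) := by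
        rw [div_sub_div _ _ (by positivity) h1.ne', div_eq_div_iff (by positivity) (by positivity)]
        ring
      rw [key]
      have : (0:ℝ) < x := hx.1
      positivity
  have h0 : (0:ℝ) ∈ Set.Icc (0:ℝ) 1 := by constructor <;> norm_num
  have := H h0 ⟨ht.1.le, ht.2.le⟩ ht.1
  simp only [Real.arctan_zero] at this
  norm_num at this
  have hDt : (0:ℝ) < 9+12*t^2-5*t^4 := hden t ⟨ht.1.le, ht.2.le⟩
  calc Real.arctan t < (9*t+9*t^3)/(9+12*t^2-5*t^4) := this
  _ = 9*t*(1+t^2)/(9+12*t^2-5*t^4) := by ring_nf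

set_option maxHeartbeats 1000000 in
lemma mainB_arctan {t : ℝ} (ht : t ∈ Set.Ioo (0:ℝ) 1) :
    (t + t^3) / (1 + 3*(2/π)*t^2 + (2/π - 1)*t^4) < Real.arctan t := by
  set c : ℝ := 2/π with hc
  have hπ : (0:ℝ) < π := Real.pi_pos
  have hc1 : 0.63 < c := by
    rw [hc, lt_div_iff₀ hπ]
    nlinarith [Real.pi_lt_d2]
  have hc2 : c < 0.64 := by
    rw [hc, div_lt_iff₀ hπ]
    nlinarith [Real.pi_gt_d6]
  have s1 : (0:ℝ) < 9*c - 4 := by nlinarith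
  have s2 : 9*c^2 + 5*c - 8 < 0 := by nlinarith
  have s3 : 6*c^2 - 5*c - 4 < 0 := by nlinarith
  have s4 : c^2 - c < 0 := by nlinarith
  have hQ : ∀ x ∈ Set.Icc (0:ℝ) 1, (0:ℝ) < 1 + 3*c*x^2 + (c-1)*x^4 := by
    rintro x ⟨h0, h1⟩
    have hx2 : x^2 ≤ 1 := by nlinarith
    have h4 : x^4 ≤ 1 := by nlinarith [sq_nonneg x]
    nlinarith [sq_nonneg x, sq_nonneg (x^2)]
  -- the function ψ
  set ψ : ℝ → ℝ := fun x => Real.arctan x - (x + x^3)/(1 + 3*c*x^2 + (c-1)*x^4) with hψ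
  have hψ0 : ψ 0 = 0 := by simp [hψ]
  have hψ1 : ψ 1 = 0 := by
    have h4c : 1 + 3*c*1^2 + (c-1)*1^4 = 4*c := by ring
    simp only [hψ, h4c, Real.arctan_one, one_pow]
    rw [hc]
    field_simp
    ring
  have hcont : ContinuousOn ψ (Set.Icc 0 1) := by
    apply ContinuousOn.sub Real.continuous_arctan.continuousOn
    exact ContinuousOn.div (by fun_prop) (by fun_prop) (fun x hx => (hQ x hx).ne')
  have hderiv : ∀ x ∈ Set.Ioo (0:ℝ) 1, deriv ψ x =
      (x^2*((9*c-4) + (9*c^2+5*c-8)*x^2 + (6*c^2-5*c-4)*x^4 + (c^2-c)*x^6))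
        / ((1+x^2)*(1 + 3*c*x^2 + (c-1)*x^4)^2) := by
    intro x hx
    have hQx : (0:ℝ) < 1 + 3*c*x^2 + (c-1)*x^4 := hQ x ⟨hx.1.le, hx.2.le⟩
    have hN : HasDerivAt (fun x : ℝ => x + x^3) (1 + 3*x^2) x := by
      have := (hasDerivAt_id x).fun_add (hasDerivAt_pow 3 x)
      simpa using this
    have hQd : HasDerivAt (fun x : ℝ => 1 + 3*c*x^2 + (c-1)*x^4)
        (3*c*(2*x) + (c-1)*(4*x^3)) x := by
      have := (((hasDerivAt_pow 2 x).const_mul (3*c)).const_add 1).fun_add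
        ((hasDerivAt_pow 4 x).const_mul (c-1))
      simpa [mul_assoc] using this
    have hd := (Real.hasDerivAt_arctan x).fun_sub (hN.fun_div hQd hQx.ne')
    rw [hd.deriv]
    have h1 : (0:ℝ) < 1 + x^2 := by positivity
    rw [div_sub_div _ _ h1.ne' (by positivity), div_eq_div_iff (by positivity) (by positivity)]
    ring
  set C : ℝ → ℝ := fun x => (9*c-4) + (9*c^2+5*c-8)*x^2 + (6*c^2-5*c-4)*x^4 + (c^2-c)*x^6
    with hC
  have key : 0 < ψ t := by
    by_cases h : 0 ≤ C t
    · -- ψ strictly increasing on [0, t]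
      have hmono : StrictMonoOn ψ (Set.Icc 0 t) := by
        apply strictMonoOn_of_deriv_pos (convex_Icc 0 t)
        · exact hcont.mono (Set.Icc_subset_Icc le_rfl ht.2.le)
        · intro x hx
          rw [interior_Icc] at hx
          have hx1 : x ∈ Set.Ioo (0:ℝ) 1 := ⟨hx.1, hx.2.trans ht.2⟩
          rw [hderiv x hx1]
          have hQx : (0:ℝ) < 1 + 3*c*x^2 + (c-1)*x^4 := hQ x ⟨hx1.1.le, hx1.2.le⟩
          have hx2t : x^2 < t^2 := by nlinarith [hx.1, hx.2, ht.1]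
          have e1 : 0 < (9*c^2+5*c-8)*(x^2-t^2) := mul_pos_of_neg_of_neg s2 (by linarith)
          have h46 : x^4 < t^4 ∧ x^6 < t^6 :=
            ⟨pow_lt_pow_left₀ hx.2 hx.1.le (by norm_num),
             pow_lt_pow_left₀ hx.2 hx.1.le (by norm_num)⟩
          have e2 : 0 < (6*c^2-5*c-4)*(x^4-t^4) :=
            mul_pos_of_neg_of_neg s3 (by linarith [h46.1])
          have e3 : 0 < (c^2-c)*(x^6-t^6) :=
            mul_pos_of_neg_of_neg s4 (by linarith [h46.2])
          have hCx : 0 < C x := by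
            have hid : C x = C t + (9*c^2+5*c-8)*(x^2-t^2) + (6*c^2-5*c-4)*(x^4-t^4)
                + (c^2-c)*(x^6-t^6) := by rw [hC]; ring
            linarith
          have hnum : 0 < x^2 * C x := mul_pos (pow_pos hx.1 2) hCx
          rw [hC] at hnum
          exact div_pos hnum (mul_pos (by positivity) (pow_pos hQx 2))
      have := hmono (Set.left_mem_Icc.mpr ht.1.le)
        (Set.right_mem_Icc.mpr ht.1.le) ht.1
      rw [hψ0] at this; exact this
    · push_neg at h
      have hanti : StrictAntiOn ψ (Set.Icc t 1) := by
        apply strictAntiOn_of_deriv_neg (convex_Icc t 1)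
        · exact hcont.mono (Set.Icc_subset_Icc ht.1.le le_rfl)
        · intro x hx
          rw [interior_Icc] at hx
          have hx1 : x ∈ Set.Ioo (0:ℝ) 1 := ⟨ht.1.trans hx.1, hx.2⟩
          rw [hderiv x hx1]
          have hQx : (0:ℝ) < 1 + 3*c*x^2 + (c-1)*x^4 := hQ x ⟨hx1.1.le, hx1.2.le⟩
          have ht2x : t^2 < x^2 := by nlinarith [hx.1, ht.1]
          have e1 : (9*c^2+5*c-8)*(x^2-t^2) < 0 := mul_neg_of_neg_of_pos s2 (by linarith)
          have h46 : t^4 < x^4 ∧ t^6 < x^6 :=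
            ⟨pow_lt_pow_left₀ hx.1 ht.1.le (by norm_num),
             pow_lt_pow_left₀ hx.1 ht.1.le (by norm_num)⟩
          have e2 : (6*c^2-5*c-4)*(x^4-t^4) < 0 :=
            mul_neg_of_neg_of_pos s3 (by linarith [h46.1])
          have e3 : (c^2-c)*(x^6-t^6) < 0 :=
            mul_neg_of_neg_of_pos s4 (by linarith [h46.2])
          have hCx : C x < 0 := by
            have hid : C x = C t + (9*c^2+5*c-8)*(x^2-t^2) + (6*c^2-5*c-4)*(x^4-t^4)
                + (c^2-c)*(x^6-t^6) := by rw [hC]; ring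
            linarith
          have hnum : x^2 * C x < 0 := mul_neg_of_pos_of_neg (pow_pos hx1.1 2) hCx
          rw [hC] at hnum
          exact div_neg_of_neg_of_pos hnum (mul_pos (by positivity) (pow_pos hQx 2))
      have := hanti (Set.left_mem_Icc.mpr ht.2.le)
        (Set.right_mem_Icc.mpr ht.2.le) ht.2
      rw [hψ1] at this; exact this
  rw [hψ] at key
  linarith [key]

lemma eqH {t : ℝ} : harmonicMean (1+t) (1-t) = 1 - t^2 := by
  rw [harmonicMean, show (1+t)+(1-t) = (2:ℝ) by ring]
  field_simp; ring

lemma eqD {t : ℝ} : contraD (1+t) (1-t) = (1+3*t^2)/(1+t^2) := by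
  rw [contraD, show (1+t)^3+(1-t)^3 = (2:ℝ)+6*t^2 by ring,
    show (1+t)^2+(1-t)^2 = (2:ℝ)+2*t^2 by ring]
  rw [div_eq_div_iff (by positivity) (by positivity)]; ring

lemma eqT {t : ℝ} : seiffertT (1+t) (1-t) = t / Real.arctan t := by
  rw [seiffertT, show (1+t)-(1-t) = 2*t by ring, show (1+t)+(1-t) = (2:ℝ) by ring,
    show 2*t/2 = t by ring, mul_div_mul_left _ _ (two_ne_zero)]

lemma normA {t : ℝ} (ht : t ∈ Set.Ioo (0:ℝ) 1) :
    (4/9)*((1+3*t^2)/(1+t^2)) + (5/9)*(1-t^2) < t / Real.arctan t := by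
  have hA : 0 < Real.arctan t := arctan_pos' ht.1
  have hDt : (0:ℝ) < 9+12*t^2-5*t^4 := by
    nlinarith [ht.1, ht.2, sq_nonneg t, sq_nonneg (t^2),
      pow_lt_pow_left₀ ht.2 ht.1.le (by norm_num : (4:ℕ) ≠ 0)]
  have h1 : (0:ℝ) < 1 + t^2 := by positivity
  have hlt := mainA_arctan ht
  have key : (9+12*t^2-5*t^4)/(9*(1+t^2)) < t / Real.arctan t := by
    rw [div_lt_div_iff₀ (by positivity) hA]
    rw [lt_div_iff₀ hDt] at hlt
    nlinarith [hlt]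
  have heq : (4/9)*((1+3*t^2)/(1+t^2)) + (5/9)*(1-t^2) = (9+12*t^2-5*t^4)/(9*(1+t^2)) := by
    field_simp; ring
  rw [heq]; exact key

lemma normB {t : ℝ} (ht : t ∈ Set.Ioo (0:ℝ) 1) :
    t / Real.arctan t < (2/π)*((1+3*t^2)/(1+t^2)) + (1-2/π)*(1-t^2) := by
  have hA : 0 < Real.arctan t := arctan_pos' ht.1
  have hπ : (0:ℝ) < π := Real.pi_pos
  have hQ : (0:ℝ) < 1 + 3*(2/π)*t^2 + (2/π - 1)*t^4 := by
    have ht4 : t^4 ≤ 1 := by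
      nlinarith [ht.1, ht.2, sq_nonneg t, sq_nonneg (t^2),
        pow_lt_pow_left₀ ht.2 ht.1.le (by norm_num : (4:ℕ) ≠ 0)]
    have hc : (0:ℝ) < 2/π := by positivity
    nlinarith [sq_nonneg t, mul_nonneg hc.le (sq_nonneg t), mul_nonneg hc.le (sq_nonneg (t^2))]
  have h1 : (0:ℝ) < 1 + t^2 := by positivity
  have hlt := mainB_arctan ht
  have key : t / Real.arctan t < (1 + 3*(2/π)*t^2 + (2/π - 1)*t^4)/(1+t^2) := by
    rw [div_lt_div_iff₀ hA h1, div_lt_iff₀ hQ] at *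
    nlinarith [hlt]
  have heq : (2/π)*((1+3*t^2)/(1+t^2)) + (1-2/π)*(1-t^2)
      = (1 + 3*(2/π)*t^2 + (2/π - 1)*t^4)/(1+t^2) := by
    field_simp; ring
  rw [heq]; exact key

lemma means_pair {α β a b : ℝ} (hα : α ≤ 4/9) (hβ : 2/π ≤ β) (hb : 0 < b) (hba : b < a) :
    α * contraD a b + (1 - α) * harmonicMean a b < seiffertT a b ∧
    seiffertT a b < β * contraD a b + (1 - β) * harmonicMean a b := by
  have hab0 : (0:ℝ) < a + b := by linarith
  have ht : (a-b)/(a+b) ∈ Set.Ioo (0:ℝ) 1 :=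
    ⟨div_pos (by linarith) hab0, (div_lt_one hab0).mpr (by linarith)⟩
  set t : ℝ := (a-b)/(a+b) with hts
  have h1t : (0:ℝ) < 1 + t^2 := by positivity
  have hσ : (0:ℝ) < (a+b)/2 := by linarith
  have hA : 0 < Real.arctan t := arctan_pos' ht.1
  have eH : harmonicMean a b = ((a+b)/2)*(1-t^2) := by
    rw [harmonicMean, hts]; field_simp; ring
  have eD : contraD a b = ((a+b)/2)*((1+3*t^2)/(1+t^2)) := by
    rw [contraD, hts]
    have hab2 : (0:ℝ) < a^2 + b^2 := by positivity
    rw [div_eq_iff hab2.ne']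
    field_simp
    ring
  have eT : seiffertT a b = ((a+b)/2)*(t/Real.arctan t) := by
    rw [seiffertT, ← hts]
    rw [div_eq_iff (by positivity : (2:ℝ)*Real.arctan t ≠ 0)]
    rw [hts]
    field_simp [show Real.arctan ((a-b)/(a+b)) ≠ 0 from hts ▸ hA.ne']
  have hDH : harmonicMean a b < contraD a b := by
    rw [eH, eD]
    apply mul_lt_mul_of_pos_left _ hσ
    rw [lt_div_iff₀ h1t]
    nlinarith [pow_pos ht.1 2]
  constructor
  · have step2 : (4/9)*contraD a b + (5/9)*harmonicMean a b < seiffertT a b := by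
      rw [eH, eD, eT]
      have hn := normA ht
      calc (4/9)*(((a+b)/2)*((1+3*t^2)/(1+t^2))) + (5/9)*(((a+b)/2)*(1-t^2))
          = ((a+b)/2)*((4/9)*((1+3*t^2)/(1+t^2)) + (5/9)*(1-t^2)) := by ring
        _ < ((a+b)/2)*(t/Real.arctan t) := mul_lt_mul_of_pos_left hn hσ
    nlinarith [mul_nonneg (by linarith : (0:ℝ) ≤ 4/9 - α) (by linarith : (0:ℝ) ≤ contraD a b - harmonicMean a b)]
  · have step2 : seiffertT a b < (2/π)*contraD a b + (1-2/π)*harmonicMean a b := by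
      rw [eH, eD, eT]
      have hn := normB ht
      calc ((a+b)/2)*(t/Real.arctan t)
          < ((a+b)/2)*((2/π)*((1+3*t^2)/(1+t^2)) + (1-2/π)*(1-t^2)) :=
            mul_lt_mul_of_pos_left hn hσ
        _ = (2/π)*(((a+b)/2)*((1+3*t^2)/(1+t^2))) + (1-2/π)*(((a+b)/2)*(1-t^2)) := by ring
    nlinarith [mul_nonneg (by linarith : (0:ℝ) ≤ β - 2/π) (by linarith : (0:ℝ) ≤ contraD a b - harmonicMean a b)]

theorem stmt_0 (α β : ℝ) :
    (∀ a b : ℝ, 0 < a → 0 < b → a ≠ b →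
      α * contraD a b + (1 - α) * harmonicMean a b < seiffertT a b ∧
      seiffertT a b < β * contraD a b + (1 - β) * harmonicMean a b) ↔
    (α ≤ 4 / 9 ∧ 2 / Real.pi ≤ β) := by
  have hπ : (0:ℝ) < π := Real.pi_pos
  constructor
  · intro h
    constructor
    · -- α ≤ 4/9 via limit t → 0+
      have hg : Filter.Tendsto (fun t : ℝ => (4-t^2)*(1+t^2)/((3-t^2)*(3+t^2)))
          (𝓝[>] (0:ℝ)) (𝓝 (4/9)) := by
        have hca : ContinuousAt (fun t : ℝ => (4-t^2)*(1+t^2)/((3-t^2)*(3+t^2))) 0 :=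
          ContinuousAt.div (by fun_prop) (by fun_prop) (by norm_num)
        have := hca.tendsto.mono_left (nhdsWithin_le_nhds (s := Set.Ioi (0:ℝ)))
        norm_num at this
        exact this
      refine ge_of_tendsto hg ?_
      filter_upwards [Ioo_mem_nhdsGT_of_mem
        (⟨le_refl 0, zero_lt_one⟩ : (0:ℝ) ∈ Set.Ico (0:ℝ) 1)] with t ht
      obtain ⟨h1, _⟩ := h (1+t) (1-t) (by linarith [ht.1]) (by linarith [ht.2])
        (by intro hEq; linarith [ht.1])
      rw [eqH, eqD, eqT] at h1
      have hA := arctan_pos' ht.1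
      have hlow := arctan_lower ht.1
      have h3 : (0:ℝ) < 3 - t^2 := by nlinarith [ht.1, ht.2]
      have hlowpos : (0:ℝ) < t - t^3/3 := by nlinarith [ht.1, ht.2]
      have hTu : t / Real.arctan t < 3/(3-t^2) := by
        have h' : t / Real.arctan t < t / (t - t^3/3) := by
          rw [div_lt_div_iff₀ hA hlowpos]
          exact mul_lt_mul_of_pos_left hlow ht.1
        have heq : t / (t - t^3/3) = 3/(3-t^2) := by
          rw [div_eq_div_iff (by linarith : t - t^3/3 ≠ 0) h3.ne']; ring
        linarith
      have hsplit : α*((1+3*t^2)/(1+t^2)) + (1-α)*(1-t^2)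
          = α*(t^2*(3+t^2)/(1+t^2)) + (1-t^2) := by field_simp; ring
      have e2 : 3/(3-t^2) - (1-t^2) = t^2*(4-t^2)/(3-t^2) := by
        field_simp; ring
      have key : α * (t^2*(3+t^2)/(1+t^2)) < t^2*(4-t^2)/(3-t^2) := by
        rw [hsplit] at h1; linarith
      have hP : (0:ℝ) < t^2*(3+t^2)/(1+t^2) :=
        div_pos (mul_pos (pow_pos ht.1 2) (by positivity)) (by positivity)
      have hlt : α < (t^2*(4-t^2)/(3-t^2)) / (t^2*(3+t^2)/(1+t^2)) := by
        rw [lt_div_iff₀ hP]; exact key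
      have hgt : (t^2*(4-t^2)/(3-t^2)) / (t^2*(3+t^2)/(1+t^2))
          = (4-t^2)*(1+t^2)/((3-t^2)*(3+t^2)) := by
        have ht0 : t ≠ 0 := ht.1.ne'
        field_simp
      rw [hgt] at hlt
      exact hlt.le
    · -- 2/π ≤ β via limit t → 1-
      have hS : Filter.Tendsto (fun t : ℝ => t / Real.arctan t) (𝓝[<] (1:ℝ)) (𝓝 (4/π)) := by
        have hca : ContinuousAt (fun t : ℝ => t / Real.arctan t) 1 := by
          apply ContinuousAt.div continuousAt_id Real.continuous_arctan.continuousAt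
          rw [Real.arctan_one]
          positivity
        have := hca.tendsto.mono_left (nhdsWithin_le_nhds (s := Set.Iio (1:ℝ)))
        rwa [Real.arctan_one, one_div_div] at this
      have hG : Filter.Tendsto (fun t : ℝ => β*((1+3*t^2)/(1+t^2)) + (1-β)*(1-t^2))
          (𝓝[<] (1:ℝ)) (𝓝 (β*2)) := by
        have hca : ContinuousAt (fun t : ℝ => β*((1+3*t^2)/(1+t^2)) + (1-β)*(1-t^2)) 1 := by
          apply ContinuousAt.add
          · exact continuousAt_const.mul (ContinuousAt.div (by fun_prop) (by fun_prop) (by norm_num))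
          · exact continuousAt_const.mul (by fun_prop)
        have := hca.tendsto.mono_left (nhdsWithin_le_nhds (s := Set.Iio (1:ℝ)))
        have h1 : β * ((1+3*(1:ℝ)^2)/(1+1^2)) + (1-β)*(1-1^2) = β*2 := by norm_num
        rwa [h1] at this
      have hle : 4/π ≤ β*2 := by
        refine le_of_tendsto_of_tendsto hS hG ?_
        filter_upwards [Ioo_mem_nhdsLT_of_mem
          (⟨zero_lt_one, le_refl 1⟩ : (1:ℝ) ∈ Set.Ioc (0:ℝ) 1)] with t ht
        obtain ⟨_, h2⟩ := h (1+t) (1-t) (by linarith [ht.1]) (by linarith [ht.2])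
          (by intro hEq; linarith [ht.1])
        rw [eqH, eqD, eqT] at h2
        exact h2.le
      have he : 2/π = (4/π)/2 := by ring
      linarith
  · rintro ⟨hα, hβ⟩ a b ha hb hab
    rcases lt_or_gt_of_ne hab with hc | hc
    · have := means_pair hα hβ ha hc
      have eHs : harmonicMean a b = harmonicMean b a := by
        rw [harmonicMean, harmonicMean, mul_comm (2*a) b, add_comm a b]
        ring_nf
      have eDs : contraD a b = contraD b a := by
        rw [contraD, contraD, add_comm (a^3) (b^3), add_comm (a^2) (b^2)]
      have eTs : seiffertT a b = seiffertT b a := by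
        rw [seiffertT, seiffertT,
          show (a-b)/(a+b) = -((b-a)/(b+a)) by rw [add_comm a b]; ring,
          Real.arctan_neg, show a - b = -(b-a) by ring]
        ring
      rw [eHs, eDs, eTs]
      exact this
    · exact means_pair hα hβ hb hc
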